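/- Let q be odd, P a homomorphism setting: suppose λ: S_n → F_q* is a group homomorphism and M is a nonzero symmetric n×n matrix over F_q with n ≥ 3 such that P_π M P_π^T = λ(π) M for every permutation π ∈ S_n. Then λ(π) = 1 for all π, and consequently M = aI + bJ for some a, b ∈ F_q. -/

import Mathlib

open Matrix

theorem perm_scaling_homomorphism_trivial {F : Type*} [Field F] [Fintype F] {n : ℕ}
    (hq : Odd (Fintype.card F)) (hn : 3 ≤ n)
    (lam : Equiv.Perm (Fin n) →* Fˣ)
    (M : Matrix (Fin n) (Fin n) F) (hMs : Mᵀ = M) (hM0 : M ≠ 0)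
    (hscale : ∀ π : Equiv.Perm (Fin n),
      (π.permMatrix F) * M * (π.permMatrix F)ᵀ = ((lam π : F)) • M) :
    (∀ π : Equiv.Perm (Fin n), lam π = 1) ∧
      ∃ a b : F, M = a • (1 : Matrix (Fin n) (Fin n) F) + b • (Matrix.of fun _ _ => (1 : F)) := by
  -- characteristic is not 2
  have h2 : (2 : F) ≠ 0 := by
    refine Ring.two_ne_zero ?_
    intro h
    have h' := FiniteField.even_card_iff_char_two.mp h
    have := Nat.odd_iff.mp hq
    omega
  have hhalf : ∀ x : F, x = -x → x = 0 := by
    intro x hx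
    have h2x : (2 : F) * x = 0 := by linear_combination hx
    rcases mul_eq_zero.mp h2x with h | h
    · exact absurd h h2
    · exact h
  -- transpose of a permutation matrix
  have hPT : ∀ σ : Equiv.Perm (Fin n), (σ.permMatrix F)ᵀ = ((σ⁻¹).permMatrix F) := by
    intro σ
    ext i j
    simp [Equiv.Perm.permMatrix, PEquiv.toMatrix, Equiv.toPEquiv,
      Equiv.Perm.eq_inv_iff_eq, eq_comm]
    simp only [Equiv.eq_symm_apply, eq_comm]
  -- entrywise form of the scaling relation
  have hE : ∀ (σ : Equiv.Perm (Fin n)) (i j : Fin n),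
      M (σ i) (σ j) = (lam σ : F) * M i j := by
    intro σ i j
    have h := hscale σ
    rw [hPT, Equiv.Perm.permMatrix, Equiv.Perm.permMatrix, PEquiv.toMatrix_toPEquiv_mul,
      PEquiv.mul_toMatrix_toPEquiv] at h
    have := congrFun (congrFun h i) j
    simpa [Equiv.Perm.inv_def] using this
  -- existence of a permutation moving a given pair to a given pair
  have hperm : ∀ (i j a b : Fin n), i ≠ j → a ≠ b →
      ∃ σ : Equiv.Perm (Fin n), σ i = a ∧ σ j = b := by
    intro i j a b hij hab
    set b' := Equiv.swap i a b with hb'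
    have hb'i : b' ≠ i := by
      intro h
      apply hab.symm
      have h' := congrArg (Equiv.swap i a) h
      rw [hb', Equiv.swap_apply_self, Equiv.swap_apply_left] at h'
      exact h'
    refine ⟨Equiv.swap i a * Equiv.swap j b', ?_, ?_⟩
    · have : Equiv.swap j b' i = i :=
        Equiv.swap_apply_of_ne_of_ne hij (Ne.symm hb'i)
      simp [Equiv.Perm.mul_apply, this]
    · simp [Equiv.Perm.mul_apply, hb']
  -- lam is trivial on transpositions
  have hswap1 : ∀ i j : Fin n, lam (Equiv.swap i j) = 1 := by
    intro i j
    by_cases hij : i = j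
    · subst hij
      rw [Equiv.swap_self]
      exact map_one lam
    have hsq : ((lam (Equiv.swap i j) : F)) * ((lam (Equiv.swap i j) : F)) = 1 := by
      rw [← Units.val_mul, ← _root_.map_mul, Equiv.swap_mul_self, _root_.map_one, Units.val_one]
    rcases mul_self_eq_one_iff.mp hsq with h | h
    · ext
      simpa using h
    -- contradiction branch: lam of this swap is -1, hence of all swaps
    exfalso
    have hallswap : ∀ a b : Fin n, a ≠ b → ((lam (Equiv.swap a b) : F)) = -1 := by
      intro a b hab
      obtain ⟨σ, hσi, hσj⟩ := hperm i j a b hij hab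
      have hconj : Equiv.swap a b = σ * Equiv.swap i j * σ⁻¹ := by
        rw [← hσi, ← hσj]; exact Equiv.swap_apply_apply σ i j
      rw [hconj, _root_.map_mul, _root_.map_mul, map_inv, mul_comm (lam σ), mul_assoc,
        mul_inv_cancel, mul_one, h]
    have hzero : ∀ k l : Fin n, M k l = 0 := by
      intro k l
      by_cases hkl : k = l
      · subst hkl
        -- find two distinct points different from k
        have hex : ∃ p q : Fin n, p ≠ q ∧ p ≠ k ∧ q ≠ k := by
          have h0 : (0 : ℕ) < n := by omega
          have h1 : (1 : ℕ) < n := by omega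
          have h2' : (2 : ℕ) < n := by omega
          by_cases hk0 : k = ⟨0, h0⟩
          · exact ⟨⟨1, h1⟩, ⟨2, h2'⟩, by simp [Fin.ext_iff], by simp [hk0, Fin.ext_iff],
              by simp [hk0, Fin.ext_iff]⟩
          by_cases hk1 : k = ⟨1, h1⟩
          · exact ⟨⟨0, h0⟩, ⟨2, h2'⟩, by simp [Fin.ext_iff], by simp [hk1, Fin.ext_iff],
              by simp [hk1, Fin.ext_iff]⟩
          · exact ⟨⟨0, h0⟩, ⟨1, h1⟩, by simp [Fin.ext_iff],
              fun hh => hk0 hh.symm, fun hh => hk1 hh.symm⟩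
        obtain ⟨p, q, hpq, hpk, hqk⟩ := hex
        have hfix : Equiv.swap p q k = k :=
          Equiv.swap_apply_of_ne_of_ne (Ne.symm hpk) (Ne.symm hqk)
        have := hE (Equiv.swap p q) k k
        rw [hfix, hallswap p q hpq] at this
        exact hhalf _ (by linear_combination this)
      · have h1 := hE (Equiv.swap k l) k l
        rw [Equiv.swap_apply_left, Equiv.swap_apply_right, hallswap k l hkl] at h1
        have hsym : M l k = M k l := by
          conv_lhs => rw [← hMs]
          rfl
        rw [hsym] at h1
        exact hhalf _ (by linear_combination h1)
    apply hM0
    ext k l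
    exact hzero k l
  -- lam is trivial
  have hlam : ∀ π : Equiv.Perm (Fin n), lam π = 1 := by
    intro π
    have hle : Subgroup.closure {σ : Equiv.Perm (Fin n) | σ.IsSwap} ≤ lam.ker := by
      rw [Subgroup.closure_le]
      rintro τ ⟨a, b, hab, rfl⟩
      exact hswap1 a b
    have : π ∈ lam.ker := by
      apply hle
      rw [Equiv.Perm.closure_isSwap]
      trivial
    exact this
  refine ⟨hlam, ?_⟩
  have hE' : ∀ (σ : Equiv.Perm (Fin n)) (i j : Fin n), M (σ i) (σ j) = M i j := by
    intro σ i j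
    rw [hE, hlam]
    simp
  have h0 : (0 : ℕ) < n := by omega
  have h1 : (1 : ℕ) < n := by omega
  set d0 : Fin n := ⟨0, h0⟩
  set d1 : Fin n := ⟨1, h1⟩
  have hd01 : d0 ≠ d1 := by simp [d0, d1, Fin.ext_iff]
  have hdiag : ∀ i : Fin n, M i i = M d0 d0 := by
    intro i
    have := hE' (Equiv.swap d0 i) d0 d0
    rwa [Equiv.swap_apply_left] at this
  have hoff : ∀ i j : Fin n, i ≠ j → M i j = M d0 d1 := by
    intro i j hij
    obtain ⟨σ, hσ0, hσ1⟩ := hperm d0 d1 i j hd01 hij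
    have := hE' σ d0 d1
    rwa [hσ0, hσ1] at this
  refine ⟨M d0 d0 - M d0 d1, M d0 d1, ?_⟩
  ext i j
  by_cases h : i = j
  · subst h
    simp only [Matrix.add_apply, Matrix.smul_apply, Matrix.one_apply_eq, Matrix.of_apply,
      smul_eq_mul, mul_one]
    rw [hdiag i]
    ring
  · simp only [Matrix.add_apply, Matrix.smul_apply, Matrix.one_apply_ne h, Matrix.of_apply,
      smul_eq_mul, mul_zero, mul_one, zero_add]
    exact hoff i j h
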